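/- Unary encoding correctness: Suppose p₁ ∈ [0,1] with p₁ = i*τ + δ where 0 ≤ i* ≤ 1/τ, 0 ≤ δ < τ, and τ = 3ε. Let v ∈ [0,1]^{1/τ} satisfy: v_i = 1 whenever p₁ > iτ + ε and v_i = 0 whenever p₁ < iτ − ε. Then v_i = 1 for all i ≤ i* − 1, v_i = 0 for all i ≥ i* + 2, at most one coordinate of v is neither forced to 0 nor 1, and i* − 1 ≤ Σᵢ vᵢ ≤ i* + 1. -/

import Mathlib

open Finset in
/-- Unary encoding correctness: with `τ = 3ε`, `p₁ = i*τ + δ` and threshold-gadget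
outputs `v_i`, the vector `v` is of the form `(1,…,1,?,0,…,0)`: `v_i = 1` for
`i ≤ i*-1`, `v_i = 0` for `i ≥ i*+2`, at most one coordinate is unforced, and
`i* - 1 ≤ Σᵢ vᵢ ≤ i* + 1`. -/
theorem stmt13 (ε τ δ p₁ : ℝ) (M istar : ℕ) (v : ℕ → ℝ)
    (hε : 0 < ε) (hτ : τ = 3 * ε) (hM : (M : ℝ) * τ = 1)
    (histar : istar ≤ M) (hδ0 : 0 ≤ δ) (hδτ : δ < τ)
    (hp₁ : p₁ = (istar : ℝ) * τ + δ)
    (hv : ∀ i ∈ Icc 1 M, 0 ≤ v i ∧ v i ≤ 1)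
    -- threshold gadget guarantees: v i = G_{> iτ}(p₁)
    (hth1 : ∀ i ∈ Icc 1 M, p₁ > (i : ℝ) * τ + ε → v i = 1)
    (hth0 : ∀ i ∈ Icc 1 M, p₁ < (i : ℝ) * τ - ε → v i = 0) :
    (∀ i ∈ Icc 1 M, i + 1 ≤ istar → v i = 1) ∧
    (∀ i ∈ Icc 1 M, istar + 2 ≤ i → v i = 0) ∧
    ((Icc 1 M).filter
        (fun (i : ℕ) => ¬(p₁ > (i : ℝ) * τ + ε) ∧ ¬(p₁ < (i : ℝ) * τ - ε))).card ≤ 1 ∧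
    ((istar : ℝ) - 1 ≤ ∑ i ∈ Icc 1 M, v i ∧ ∑ i ∈ Icc 1 M, v i ≤ (istar : ℝ) + 1) := by
  have hτpos : 0 < τ := by linarith
  have h1 : ∀ i ∈ Icc 1 M, i + 1 ≤ istar → v i = 1 := by
    intro i hi h
    apply hth1 i hi
    have h' : ((i : ℝ) + 1) ≤ (istar : ℝ) := by exact_mod_cast h
    have := mul_le_mul_of_nonneg_right h' hτpos.le
    rw [hp₁]; linarith
  have h0 : ∀ i ∈ Icc 1 M, istar + 2 ≤ i → v i = 0 := by
    intro i hi h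
    apply hth0 i hi
    have h' : ((istar : ℝ) + 2) ≤ (i : ℝ) := by exact_mod_cast h
    have := mul_le_mul_of_nonneg_right h' hτpos.le
    rw [hp₁]; linarith
  refine ⟨h1, h0, ?_, ?_, ?_⟩
  · apply Finset.card_le_one.2
    intro a ha b hb
    simp only [Finset.mem_filter, not_lt] at ha hb
    obtain ⟨_, ha1, ha2⟩ := ha
    obtain ⟨_, hb1, hb2⟩ := hb
    rcases lt_trichotomy a b with h | h | h
    · exfalso
      have h' : ((a : ℝ) + 1) ≤ (b : ℝ) := by exact_mod_cast h
      have := mul_le_mul_of_nonneg_right h' hτpos.le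
      linarith
    · exact h
    · exfalso
      have h' : ((b : ℝ) + 1) ≤ (a : ℝ) := by exact_mod_cast h
      have := mul_le_mul_of_nonneg_right h' hτpos.le
      linarith
  · -- lower bound
    have hsub : Icc 1 (istar - 1) ⊆ Icc 1 M := by
      apply Finset.Icc_subset_Icc_right
      omega
    have hone : ∀ i ∈ Icc 1 (istar - 1), v i = 1 := by
      intro i hi
      have hi' := Finset.mem_Icc.1 hi
      exact h1 i (hsub hi) (by omega)
    have hsum1 : ∑ i ∈ Icc 1 (istar - 1), v i = (istar - 1 : ℕ) := by
      rw [Finset.sum_congr rfl hone]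
      simp
    have hle : ∑ i ∈ Icc 1 (istar - 1), v i ≤ ∑ i ∈ Icc 1 M, v i := by
      apply Finset.sum_le_sum_of_subset_of_nonneg hsub
      intro i hi _
      exact (hv i hi).1
    have hcast : ((istar : ℝ) - 1) ≤ ((istar - 1 : ℕ) : ℝ) := by
      rcases Nat.eq_zero_or_pos istar with h | h
      · simp [h]
      · have : ((istar - 1 : ℕ) : ℝ) = (istar : ℝ) - 1 := by
          push_cast [Nat.cast_sub h]; ring
        linarith
    linarith
  · -- upper bound
    rw [← Finset.sum_filter_add_sum_filter_not (Icc 1 M) (fun i => i ≤ istar + 1)]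
    have hz : ∑ i ∈ (Icc 1 M).filter (fun i => ¬ i ≤ istar + 1), v i = 0 := by
      apply Finset.sum_eq_zero
      intro i hi
      have := Finset.mem_filter.1 hi
      exact h0 i this.1 (by omega)
    rw [hz, add_zero]
    have hle : ∑ i ∈ (Icc 1 M).filter (fun i => i ≤ istar + 1), v i ≤
        ((Icc 1 M).filter (fun i => i ≤ istar + 1)).card := by
      calc ∑ i ∈ (Icc 1 M).filter (fun i => i ≤ istar + 1), v i
          ≤ ∑ i ∈ (Icc 1 M).filter (fun i => i ≤ istar + 1), (1 : ℝ) := by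
            apply Finset.sum_le_sum
            intro i hi
            exact (hv i (Finset.mem_filter.1 hi).1).2
        _ = _ := by simp
    have hcard : ((Icc 1 M).filter (fun i => i ≤ istar + 1)).card ≤ istar + 1 := by
      have : (Icc 1 M).filter (fun i => i ≤ istar + 1) ⊆ Icc 1 (istar + 1) := by
        intro i hi
        have := Finset.mem_filter.1 hi
        have := Finset.mem_Icc.1 this.1
        simp only [Finset.mem_Icc]
        omega
      calc _ ≤ (Icc 1 (istar + 1)).card := Finset.card_le_card this
        _ = istar + 1 := by simp
    have : (((Icc 1 M).filter (fun i => i ≤ istar + 1)).card : ℝ) ≤ (istar : ℝ) + 1 := by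
      exact_mod_cast hcard
    linarith
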